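/- For any real numbers v and w, the product of an element of A_v and an element of A_w lies in A_{v+w}; in particular A_0 is a subring of F[u] containing the ring of integers of F, and each A_v is an A_0-module. -/

import Mathlib

open Polynomial

/-- `f ∈ A_v` iff writing `f = ∑ y_j E^j` with `E = u + p` (so `y_j` is the `j`-th
coefficient of `f.comp (X - C p)`), every nonzero `y_j` satisfies
`v_p(y_j) + v_p(j!) + j ≥ v`. -/
def MemA {F : Type*} [Field F] (p : ℕ) (vp : F → ℝ) (v : ℝ) (f : Polynomial F) : Prop :=
  ∀ j : ℕ, (f.comp (X - C (p : F))).coeff j ≠ 0 →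
    v ≤ vp ((f.comp (X - C (p : F))).coeff j) + (padicValNat p (Nat.factorial j) : ℝ) + (j : ℝ)

lemma vp_sum_ge {F : Type*} [Field F] (vp : F → ℝ)
    (hadd : ∀ x y : F, x ≠ 0 → y ≠ 0 → x + y ≠ 0 → min (vp x) (vp y) ≤ vp (x + y))
    {ι : Type*} (s : Finset ι) (f : ι → F) (c : ℝ)
    (h : ∀ i ∈ s, f i ≠ 0 → c ≤ vp (f i)) (hs : ∑ i ∈ s, f i ≠ 0) :
    c ≤ vp (∑ i ∈ s, f i) := by
  classical
  induction s using Finset.induction_on with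
  | empty => simp at hs
  | @insert a s ha ih =>
    rw [Finset.sum_insert ha] at hs ⊢
    by_cases h1 : f a = 0
    · rw [h1, zero_add] at hs ⊢
      exact ih (fun i hi => h i (Finset.mem_insert_of_mem hi)) hs
    by_cases h2 : (∑ i ∈ s, f i) = 0
    · rw [h2, add_zero] at hs ⊢
      exact h a (Finset.mem_insert_self a s) h1
    · exact le_trans (le_min (h a (Finset.mem_insert_self a s) h1)
        (ih (fun i hi => h i (Finset.mem_insert_of_mem hi)) h2)) (hadd _ _ h1 h2 hs)

lemma fact_val_le {p : ℕ} (hp : p.Prime) (a b : ℕ) :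
    padicValNat p a.factorial + padicValNat p b.factorial ≤ padicValNat p (a + b).factorial := by
  haveI := Fact.mk hp
  obtain ⟨c, hc⟩ := Nat.factorial_mul_factorial_dvd_factorial_add a b
  have hc0 : c ≠ 0 := by
    intro h; rw [h, mul_zero] at hc; exact (Nat.factorial_ne_zero (a + b)) hc
  rw [hc, padicValNat.mul (mul_ne_zero (Nat.factorial_ne_zero a) (Nat.factorial_ne_zero b)) hc0,
    padicValNat.mul (Nat.factorial_ne_zero a) (Nat.factorial_ne_zero b)]
  exact Nat.le_add_right _ _

/-- `A_v · A_w ⊆ A_{v+w}`; in particular `A_0` is a subring of `F[u]` containing the ring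
of integers of `F`, and each `A_v` is an `A_0`-module. -/
theorem memA_mul_and_subring {F : Type*} [Field F] (p : ℕ) (hp : p.Prime) (hodd : p ≠ 2)
    (vp : F → ℝ)
    (hmul : ∀ x y : F, x ≠ 0 → y ≠ 0 → vp (x * y) = vp x + vp y)
    (hadd : ∀ x y : F, x ≠ 0 → y ≠ 0 → x + y ≠ 0 → min (vp x) (vp y) ≤ vp (x + y))
    (hvp : vp ((p : ℕ) : F) = 1) :
    (∀ (v w : ℝ) (f g : Polynomial F),
        MemA p vp v f → MemA p vp w g → MemA p vp (v + w) (f * g)) ∧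
    (∀ (v : ℝ) (f g : Polynomial F), MemA p vp v f → MemA p vp v g → MemA p vp v (f + g)) ∧
    MemA p vp 0 (1 : Polynomial F) ∧
    (∀ x : F, x ≠ 0 → 0 ≤ vp x → MemA p vp 0 (C x)) ∧
    (∀ (v : ℝ) (f g : Polynomial F), MemA p vp 0 f → MemA p vp v g → MemA p vp v (f * g)) := by
  have hone : vp (1 : F) = 0 := by
    have := hmul 1 1 one_ne_zero one_ne_zero
    rw [mul_one] at this; linarith
  have hmulA : ∀ (v w : ℝ) (f g : Polynomial F),
      MemA p vp v f → MemA p vp w g → MemA p vp (v + w) (f * g) := by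
    intro v w f g hf hg j hne
    rw [mul_comp, coeff_mul] at hne ⊢
    have key : v + w - (padicValNat p (Nat.factorial j) : ℝ) - (j : ℝ) ≤
        vp (∑ x ∈ Finset.HasAntidiagonal.antidiagonal j,
          (f.comp (X - C (p : F))).coeff x.1 * (g.comp (X - C (p : F))).coeff x.2) := by
      apply vp_sum_ge vp hadd _ _ _ _ hne
      rintro ⟨a, b⟩ hab hab0
      have hj : a + b = j := Finset.HasAntidiagonal.mem_antidiagonal.mp hab
      have ha0 : (f.comp (X - C (p : F))).coeff a ≠ 0 := left_ne_zero_of_mul hab0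
      have hb0 : (g.comp (X - C (p : F))).coeff b ≠ 0 := right_ne_zero_of_mul hab0
      rw [hmul _ _ ha0 hb0]
      have h1 := hf a ha0
      have h2 := hg b hb0
      have h3 : (padicValNat p a.factorial : ℝ) + (padicValNat p b.factorial : ℝ) ≤
          (padicValNat p (Nat.factorial j) : ℝ) := by
        subst hj
        exact_mod_cast fact_val_le hp a b
      have h4 : (a : ℝ) + (b : ℝ) = (j : ℝ) := by exact_mod_cast congrArg (Nat.cast : ℕ → ℝ) hj
      linarith
    linarith
  refine ⟨hmulA, ?_, ?_, ?_, fun v f g hf hg => by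
    simpa using hmulA 0 v f g hf hg⟩
  · intro v f g hf hg j hne
    rw [add_comp, coeff_add] at hne ⊢
    by_cases h1 : (f.comp (X - C (p : F))).coeff j = 0
    · rw [h1, zero_add] at hne ⊢
      exact hg j hne
    by_cases h2 : (g.comp (X - C (p : F))).coeff j = 0
    · rw [h2, add_zero] at hne ⊢
      exact hf j hne
    · have := hadd _ _ h1 h2 hne
      have h3 := hf j h1
      have h4 := hg j h2
      rcases min_le_iff.mp this with h | h <;> linarith
  · intro j hne
    rw [one_comp] at hne ⊢
    rcases Nat.eq_zero_or_pos j with rfl | hj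
    · simp [hone]
    · exfalso; apply hne
      rw [coeff_one, if_neg (by omega)]
  · intro x hx hvx j hne
    rw [C_comp] at hne ⊢
    rcases Nat.eq_zero_or_pos j with rfl | hj
    · simpa using by positivity
    · exfalso; apply hne
      rw [coeff_C, if_neg (by omega)]
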